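/- arXiv:1601.01173 — 2 statements merged into one kernel-verified Lean document; each statement's English description precedes it below -/
import Mathlib

section
/- Let A, Ā be K×R matrices of full column rank over a field F, and B, B̄ be N×R matrices of full column rank over F, with A·Bᵀ = Ā·B̄ᵀ. Then the R×R matrix T = Ā⁺·A (where Ā⁺ is a left inverse of Ā) is invertible and satisfies T·Bᵀ = B̄ᵀ. -/
theorem left_inverse_transfer_matrix_invertible
    {F : Type*} [Field F] {K R N : ℕ}
    (A Abar : Matrix (Fin K) (Fin R) F) (B Bbar : Matrix (Fin N) (Fin R) F)
    (hA : LinearIndependent F A.transpose)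
    (hAbar : LinearIndependent F Abar.transpose)
    (hB : LinearIndependent F B.transpose)
    (hBbar : LinearIndependent F Bbar.transpose)
    (Ap : Matrix (Fin R) (Fin K) F) (hAp : Ap * Abar = 1)
    (h : A * B.transpose = Abar * Bbar.transpose) :
    IsUnit (Ap * A) ∧ (Ap * A) * B.transpose = Bbar.transpose := by
  have heq : (Ap * A) * B.transpose = Bbar.transpose := by
    rw [Matrix.mul_assoc, h, ← Matrix.mul_assoc, hAp, Matrix.one_mul]
  refine ⟨?_, heq⟩
  rw [← Matrix.vecMul_injective_iff_isUnit]
  have hinj : Function.Injective Bbar.transpose.vecMul :=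
    Matrix.vecMul_injective_iff.mpr hBbar
  intro x y hxy
  apply hinj
  have : ∀ c : Fin R → F, Matrix.vecMul c Bbar.transpose
      = Matrix.vecMul (Matrix.vecMul c (Ap * A)) B.transpose := by
    intro c
    rw [Matrix.vecMul_vecMul, heq]
  show Matrix.vecMul x Bbar.transpose = Matrix.vecMul y Bbar.transpose
  simp only [] at hxy
  rw [this x, this y, hxy]
end

section
/- Let b : ℂ^{2I} → ℂ^{I²} be the polynomial map b(ζ) = (u − i v) ⊗ (u + i v), u = (ζ_1,…,ζ_I), v = (ζ_{I+1},…,ζ_{2I}). Then for every ζ ∈ ℂ^{2I}, the Jacobian matrix J(b, ζ) ∈ ℂ^{I² × 2I} satisfies J(b, ζ)·w = 0 for w = (ζ_{I+1}, …, ζ_{2I}, −ζ_1, …, −ζ_I)ᵀ; hence rank J(b, ζ) ≤ 2I − 1 at every point ζ. -/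
/-- Kronecker product of two vectors. -/
def vecKron {I : ℕ} (u v : Fin I → ℂ) : Fin I × Fin I → ℂ :=
  fun p => u p.1 * v p.2

/-- The polynomial map `b(u, v) = (u - i v) ⊗ (u + i v)`. -/
def sobiumB {I : ℕ} (uv : (Fin I → ℂ) × (Fin I → ℂ)) : Fin I × Fin I → ℂ :=
  vecKron (uv.1 - Complex.I • uv.2) (uv.1 + Complex.I • uv.2)

noncomputable def L1 {I : ℕ} (p : Fin I) : ((Fin I → ℂ) × (Fin I → ℂ)) →L[ℂ] ℂ :=
  (ContinuousLinearMap.proj p).comp (ContinuousLinearMap.fst ℂ _ _)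
    - Complex.I • (ContinuousLinearMap.proj p).comp (ContinuousLinearMap.snd ℂ _ _)

noncomputable def L2 {I : ℕ} (p : Fin I) : ((Fin I → ℂ) × (Fin I → ℂ)) →L[ℂ] ℂ :=
  (ContinuousLinearMap.proj p).comp (ContinuousLinearMap.fst ℂ _ _)
    + Complex.I • (ContinuousLinearMap.proj p).comp (ContinuousLinearMap.snd ℂ _ _)

@[simp] lemma L1_apply {I : ℕ} (p : Fin I) (w : (Fin I → ℂ) × (Fin I → ℂ)) :
    L1 p w = w.1 p - Complex.I * w.2 p := by
  simp [L1]

@[simp] lemma L2_apply {I : ℕ} (p : Fin I) (w : (Fin I → ℂ) × (Fin I → ℂ)) :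
    L2 p w = w.1 p + Complex.I * w.2 p := by
  simp [L2]

noncomputable def sobiumD {I : ℕ} (uv : (Fin I → ℂ) × (Fin I → ℂ)) :
    ((Fin I → ℂ) × (Fin I → ℂ)) →L[ℂ] (Fin I × Fin I → ℂ) :=
  ContinuousLinearMap.pi fun p => L1 p.1 uv • L2 p.2 + L2 p.2 uv • L1 p.1

lemma hasFDerivAt_sobiumB {I : ℕ} (uv : (Fin I → ℂ) × (Fin I → ℂ)) :
    HasFDerivAt sobiumB (sobiumD uv) uv := by
  rw [hasFDerivAt_pi']
  intro p
  have h : HasFDerivAt (fun x : (Fin I → ℂ) × (Fin I → ℂ) => L1 p.1 x * L2 p.2 x)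
      (L1 p.1 uv • L2 p.2 + L2 p.2 uv • L1 p.1) uv :=
    ((L1 p.1).hasFDerivAt.mul (L2 p.2).hasFDerivAt)
  have hfun : (fun x : (Fin I → ℂ) × (Fin I → ℂ) => sobiumB x p)
      = fun x => L1 p.1 x * L2 p.2 x := by
    funext x; simp [sobiumB, vecKron]
  have e1 : (ContinuousLinearMap.proj p).comp (sobiumD uv)
      = L1 p.1 uv • L2 p.2 + L2 p.2 uv • L1 p.1 := by
    refine ContinuousLinearMap.ext fun w => ?_
    simp [sobiumD]
  rw [hfun, e1]
  exact h

theorem sobiumB_jacobian_kernel (I : ℕ) (hI : 0 < I) (u v : Fin I → ℂ) :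
    fderiv ℂ sobiumB (u, v) (v, -u) = 0 ∧
    LinearMap.rank (fderiv ℂ sobiumB (u, v)).toLinearMap
      ≤ ((2 * I - 1 : ℕ) : Cardinal) := by
  have hD := (hasFDerivAt_sobiumB (u, v)).fderiv
  rw [hD]
  set g := (sobiumD (u, v)).toLinearMap with hg
  have hker : g (v, -u) = 0 := by
    funext p
    simp [g, sobiumD]
    ring_nf
    rw [Complex.I_sq]
    ring
  constructor
  · exact hker
  · -- kernel is nontrivial
    have hwit : ∃ w : (Fin I → ℂ) × (Fin I → ℂ), w ≠ 0 ∧ g w = 0 := by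
      by_cases h : (u, v) = (0 : (Fin I → ℂ) × (Fin I → ℂ))
      · refine ⟨(Pi.single ⟨0, hI⟩ 1, 0), ?_, ?_⟩
        · intro hcontra
          have := congrFun (congrArg Prod.fst hcontra) ⟨0, hI⟩
          simp at this
        · have hu : u = 0 := congrArg Prod.fst h
          have hv : v = 0 := congrArg Prod.snd h
          funext p
          simp [g, sobiumD, hu, hv]
      · refine ⟨(v, -u), ?_, hker⟩
        intro hcontra
        apply h
        have hv : v = 0 := congrArg Prod.fst hcontra
        have hu : -u = 0 := congrArg Prod.snd hcontra
        simp [hv, neg_eq_zero.mp hu]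
    obtain ⟨w, hw0, hgw⟩ := hwit
    have hkerpos : 0 < Module.finrank ℂ (LinearMap.ker g) := by
      rw [Module.finrank_pos_iff]
      exact ⟨⟨⟨w, hgw⟩, 0, by simp [Subtype.ext_iff, hw0]⟩⟩
    have hrn := LinearMap.finrank_range_add_finrank_ker g
    have hdom : Module.finrank ℂ ((Fin I → ℂ) × (Fin I → ℂ)) = 2 * I := by
      simp [Module.finrank_prod]
      ring
    have hle : Module.finrank ℂ (LinearMap.range g) ≤ 2 * I - 1 := by omega
    have : LinearMap.rank g = (Module.finrank ℂ (LinearMap.range g) : Cardinal) :=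
      (Module.finrank_eq_rank ℂ _).symm
    rw [this]
    exact_mod_cast Nat.cast_le.mpr hle
end
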